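/- Let A ∈ ℝ^{n×n} be the tridiagonal discrete Laplacian with diagonal (1,2,...,2,1) and off-diagonals −1, and let S := (A + (1/n²)·I_n)^{-1}. Then for every integer n ≥ 1, the entries S_{1,n} and S_{n,n} satisfy (1 − π²/12)·n ≤ S_{1,n}, S_{n,n} ≤ (1 + π²/12)·n. -/

import Mathlib

set_option linter.unusedSectionVars false
open Real



/-- The tridiagonal 1-D discrete Laplacian with diagonal (1,2,...,2,1) and off-diagonals -1. -/
def lap (n : ℕ) : Matrix (Fin n) (Fin n) ℝ :=
  Matrix.of fun i j =>
    if i = j then (if (i : ℕ) = 0 ∨ (i : ℕ) = n - 1 then 1 else 2)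
    else if (i : ℕ) + 1 = (j : ℕ) ∨ (j : ℕ) + 1 = (i : ℕ) then -1 else 0

/-- `S = (A + (1/n²) I)⁻¹`. -/
noncomputable def Smat (n : ℕ) : Matrix (Fin n) (Fin n) ℝ :=
  (lap n + ((1 : ℝ) / (n : ℝ)^2) • (1 : Matrix (Fin n) (Fin n) ℝ))⁻¹



open Real

noncomputable def tpar (n : ℕ) : ℝ := 2 * Real.arsinh (1 / (2 * n))

noncomputable def fv (n : ℕ) (x : ℝ) : ℝ := Real.cosh ((x + 1/2) * tpar n)
noncomputable def gv (n : ℕ) (x : ℝ) : ℝ := Real.cosh (((n : ℝ) - 1/2 - x) * tpar n)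
noncomputable def Dv (n : ℕ) : ℝ := Real.sinh (tpar n) * Real.sinh (n * tpar n)

section scalar
variable {n : ℕ} (hn : 1 ≤ n)
include hn

lemma npos : (0:ℝ) < n := by exact_mod_cast hn

lemma tpar_pos : 0 < tpar n := by
  have := npos hn
  have : (0:ℝ) < 1 / (2*n) := by positivity
  simpa [tpar] using mul_pos two_pos (Real.arsinh_pos_iff.mpr this)

lemma sinh_half : Real.sinh (tpar n / 2) = 1 / (2 * n) := by
  rw [tpar]; rw [show (2 : ℝ) * Real.arsinh (1/(2*n)) / 2 = Real.arsinh (1/(2*n)) by ring]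
  exact Real.sinh_arsinh _

lemma cosh_tpar : Real.cosh (tpar n) = 1 + 1 / (2 * n^2) := by
  have h1 : tpar n = 2 * (tpar n / 2) := by ring
  rw [h1, Real.cosh_two_mul, Real.cosh_sq, sinh_half hn]
  have := npos hn
  field_simp
  ring

lemma sinh_tpar : Real.sinh (tpar n) = Real.cosh (tpar n / 2) / n := by
  have h1 : tpar n = 2 * (tpar n / 2) := by ring
  rw [h1, Real.sinh_two_mul, sinh_half hn]
  have := npos hn
  rw [show (2:ℝ) * (tpar n / 2) / 2 = tpar n / 2 by ring]
  field_simp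

lemma rec_cosh (x : ℝ) : Real.cosh (x - tpar n) + Real.cosh (x + tpar n)
    = (2 + 1/(n:ℝ)^2) * Real.cosh x := by
  rw [Real.cosh_sub, Real.cosh_add, cosh_tpar hn]
  have := npos hn
  field_simp
  ring

lemma wron_cosh (a b : ℝ) : Real.cosh (a + tpar n) * Real.cosh b
    - Real.cosh a * Real.cosh (b - tpar n) = Real.sinh (tpar n) * Real.sinh (a + b) := by
  rw [Real.cosh_add, Real.cosh_sub, Real.sinh_add]; ring

lemma bdry_cosh : (1 + 1/(n:ℝ)^2) * Real.cosh (tpar n / 2)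
    = Real.cosh (tpar n / 2 + tpar n) := by
  have h := rec_cosh hn (tpar n / 2)
  rw [show tpar n / 2 - tpar n = -(tpar n / 2) by ring, Real.cosh_neg] at h
  linarith

end scalar
noncomputable def TT (n : ℕ) : Matrix (Fin n) (Fin n) ℝ :=
  Matrix.of fun i j =>
    if (i : ℕ) ≤ (j : ℕ) then fv n (i : ℕ) * gv n (j : ℕ) / Dv n
    else fv n (j : ℕ) * gv n (i : ℕ) / Dv n

section fg
variable {n : ℕ} (hn : 1 ≤ n)
include hn

lemma Dv_pos : 0 < Dv n := by
  have ht := tpar_pos hn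
  have hnt : 0 < (n:ℝ) * tpar n := mul_pos (npos hn) ht
  exact mul_pos (Real.sinh_pos_iff.mpr ht) (Real.sinh_pos_iff.mpr hnt)

lemma rec_fv (x : ℝ) : fv n (x-1) + fv n (x+1) = (2 + 1/(n:ℝ)^2) * fv n x := by
  have h := rec_cosh hn ((x + 1/2) * tpar n)
  rw [show (x+1/2)*tpar n - tpar n = (x-1+1/2)*tpar n by ring,
      show (x+1/2)*tpar n + tpar n = (x+1+1/2)*tpar n by ring] at h
  exact h

lemma rec_gv (x : ℝ) : gv n (x-1) + gv n (x+1) = (2 + 1/(n:ℝ)^2) * gv n x := by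
  have h := rec_cosh hn (((n:ℝ) - 1/2 - x) * tpar n)
  rw [show ((n:ℝ)-1/2-x)*tpar n - tpar n = ((n:ℝ)-1/2-(x+1))*tpar n by ring,
      show ((n:ℝ)-1/2-x)*tpar n + tpar n = ((n:ℝ)-1/2-(x-1))*tpar n by ring] at h
  rw [gv, gv, gv, add_comm]
  exact h

lemma bdry_fv : (1 + 1/(n:ℝ)^2) * fv n 0 = fv n 1 := by
  have h := bdry_cosh hn
  rw [fv, fv, show ((0:ℝ)+1/2)*tpar n = tpar n / 2 by ring,
      show ((1:ℝ)+1/2)*tpar n = tpar n / 2 + tpar n by ring]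
  exact h

lemma bdry_gv : (1 + 1/(n:ℝ)^2) * gv n ((n:ℝ)-1) = gv n ((n:ℝ)-2) := by
  have h := bdry_cosh hn
  rw [gv, gv, show ((n:ℝ)-1/2-((n:ℝ)-1))*tpar n = tpar n / 2 by ring,
      show ((n:ℝ)-1/2-((n:ℝ)-2))*tpar n = tpar n / 2 + tpar n by ring]
  exact h

lemma wron_fg (x : ℝ) : fv n (x+1) * gv n x - fv n x * gv n (x+1) = Dv n := by
  have h := wron_cosh hn ((x+1/2)*tpar n) (((n:ℝ)-1/2-x)*tpar n)
  rw [show (x+1/2)*tpar n + tpar n = (x+1+1/2)*tpar n by ring,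
      show ((n:ℝ)-1/2-x)*tpar n - tpar n = ((n:ℝ)-1/2-(x+1))*tpar n by ring,
      show (x+1/2)*tpar n + ((n:ℝ)-1/2-x)*tpar n = (n:ℝ)*tpar n by ring] at h
  rw [fv, fv, gv, gv, Dv]
  exact h

end fg

lemma TT_apply_le {n : ℕ} (k j : Fin n) (h : (k:ℕ) ≤ (j:ℕ)) :
    TT n k j = fv n (k : ℕ) * gv n (j : ℕ) / Dv n := by
  simp only [TT, Matrix.of_apply, if_pos h]

lemma TT_apply_ge {n : ℕ} (k j : Fin n) (h : (j:ℕ) ≤ (k:ℕ)) :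
    TT n k j = fv n (j : ℕ) * gv n (k : ℕ) / Dv n := by
  simp only [TT, Matrix.of_apply]
  split_ifs with h'
  · have : (k:ℕ) = (j:ℕ) := le_antisymm h' h
    rw [this]
  · rfl

lemma sum_ite_val {n : ℕ} (F : Fin n → ℝ) {m : ℕ} (hm : m < n) :
    (∑ k : Fin n, if (k : ℕ) = m then F k else 0) = F ⟨m, hm⟩ := by
  rw [Finset.sum_eq_single (⟨m, hm⟩ : Fin n)]
  · simp
  · intro b _ hb
    exact if_neg (fun h => hb (Fin.ext h))
  · intro h; exact absurd (Finset.mem_univ _) h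
lemma comb2 (c X Y D : ℝ) : c * (X / D) + -(Y / D) = (c * X - Y) / D := by ring
lemma comb3 (c X Y Z D : ℝ) :
    c * (X / D) + (-(Y / D) + -(Z / D)) = (c * X - Y - Z) / D := by ring

set_option maxHeartbeats 1000000 in
theorem mulTT {n : ℕ} (hn : 2 ≤ n) :
    (lap n + ((1 : ℝ) / (n : ℝ)^2) • (1 : Matrix (Fin n) (Fin n) ℝ)) * TT n = 1 := by
  have hn1 : 1 ≤ n := by omega
  have hD : Dv n ≠ 0 := ne_of_gt (Dv_pos hn1)
  ext i j
  rw [Matrix.mul_apply, Matrix.one_apply]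
  have hiv := i.isLt
  have hjv := j.isLt
  by_cases hi0 : (i : ℕ) = 0
  · -- first row
    have hrow : ∀ k : Fin n,
        (lap n + ((1:ℝ)/(n:ℝ)^2) • (1 : Matrix (Fin n) (Fin n) ℝ)) i k * TT n k j
        = (if (k:ℕ) = 0 then (1+(1:ℝ)/(n:ℝ)^2) * TT n k j else 0)
          + (if (k:ℕ) = 1 then -TT n k j else 0) := by
      intro k
      have hkv := k.isLt
      simp only [Matrix.add_apply, Matrix.smul_apply, Matrix.one_apply, lap,
        Matrix.of_apply, smul_eq_mul, Fin.ext_iff]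
      split_ifs
      all_goals try ring
      all_goals exfalso
      all_goals omega
    rw [Finset.sum_congr rfl (fun k _ => hrow k), Finset.sum_add_distrib,
      sum_ite_val (fun k => (1+(1:ℝ)/(n:ℝ)^2) * TT n k j) (show 0 < n by omega),
      sum_ite_val (fun k => -TT n k j) (show 1 < n by omega)]
    try simp only []
    have e0 : TT n ⟨0, by omega⟩ j = fv n 0 * gv n (j:ℕ) / Dv n := by
      rw [TT_apply_le _ _ (by simp)]
      norm_num
    by_cases hj0 : (j : ℕ) = 0
    · rw [if_pos (Fin.ext (by omega : (i:ℕ) = (j:ℕ)))]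
      have hjr : ((j:ℕ) : ℝ) = 0 := by rw [hj0]; norm_num
      have e1 : TT n ⟨1, by omega⟩ j = fv n 0 * gv n 1 / Dv n := by
        rw [TT_apply_ge _ _ (by simp [hj0]), hjr]
        norm_num
      rw [e0, e1, hjr, comb2, div_eq_iff hD]
      have hb := bdry_fv hn1
      have hw := wron_fg hn1 0
      norm_num at hw
      linear_combination gv n 0 * hb + hw
    · rw [if_neg (fun h => hj0 (by rw [← Fin.ext_iff.mp h]; exact hi0))]
      have e1 : TT n ⟨1, by omega⟩ j = fv n 1 * gv n (j:ℕ) / Dv n := by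
        rw [TT_apply_le _ _ (by simp; omega)]
        norm_num
      rw [e0, e1, comb2, div_eq_iff hD]
      have hb := bdry_fv hn1
      linear_combination gv n ((j:ℕ):ℝ) * hb
  · by_cases hin : (i : ℕ) = n - 1
    · -- last row
      have hrow : ∀ k : Fin n,
          (lap n + ((1:ℝ)/(n:ℝ)^2) • (1 : Matrix (Fin n) (Fin n) ℝ)) i k * TT n k j
          = (if (k:ℕ) = n-1 then (1+(1:ℝ)/(n:ℝ)^2) * TT n k j else 0)
            + (if (k:ℕ) = n-2 then -TT n k j else 0) := by
        intro k
        have hkv := k.isLt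
        simp only [Matrix.add_apply, Matrix.smul_apply, Matrix.one_apply, lap,
          Matrix.of_apply, smul_eq_mul, Fin.ext_iff]
        split_ifs
        all_goals try ring
        all_goals exfalso
        all_goals omega
      rw [Finset.sum_congr rfl (fun k _ => hrow k), Finset.sum_add_distrib,
        sum_ite_val (fun k => (1+(1:ℝ)/(n:ℝ)^2) * TT n k j) (show n-1 < n by omega),
        sum_ite_val (fun k => -TT n k j) (show n-2 < n by omega)]
      try simp only []
      have hcast1 : ((n - 1 : ℕ) : ℝ) = (n : ℝ) - 1 := by
        rw [Nat.cast_sub hn1]; norm_num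
      have hcast2 : ((n - 2 : ℕ) : ℝ) = (n : ℝ) - 2 := by
        rw [Nat.cast_sub hn]; norm_num
      by_cases hjn : (j : ℕ) = n - 1
      · rw [if_pos (Fin.ext (by omega : (i:ℕ) = (j:ℕ)))]
        have hjr : ((j:ℕ) : ℝ) = (n:ℝ) - 1 := by rw [hjn]; exact hcast1
        have e0 : TT n ⟨n-1, by omega⟩ j = fv n ((n:ℝ)-1) * gv n ((n:ℝ)-1) / Dv n := by
          rw [TT_apply_le _ _ (by simp [hjn]), hjr]
          simp only [Fin.val_mk, hcast1]
        have e1 : TT n ⟨n-2, by omega⟩ j = fv n ((n:ℝ)-2) * gv n ((n:ℝ)-1) / Dv n := by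
          rw [TT_apply_le _ _ (by simp [hjn]; omega), hjr]
          simp only [Fin.val_mk, hcast2]
        rw [e0, e1, comb2, div_eq_iff hD]
        have hb := bdry_gv hn1
        have hw := wron_fg hn1 ((n:ℝ)-2)
        rw [show (n:ℝ)-2+1 = (n:ℝ)-1 by ring] at hw
        linear_combination fv n ((n:ℝ)-1) * hb + hw
      · rw [if_neg (fun h => hjn (by rw [← Fin.ext_iff.mp h]; exact hin))]
        have e0 : TT n ⟨n-1, by omega⟩ j = fv n (j:ℕ) * gv n ((n:ℝ)-1) / Dv n := by
          rw [TT_apply_ge _ _ (by simp; omega)]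
          simp only [Fin.val_mk, hcast1]
        have e1 : TT n ⟨n-2, by omega⟩ j = fv n (j:ℕ) * gv n ((n:ℝ)-2) / Dv n := by
          rw [TT_apply_ge _ _ (by simp; omega)]
          simp only [Fin.val_mk, hcast2]
        rw [e0, e1, comb2, div_eq_iff hD]
        have hb := bdry_gv hn1
        linear_combination fv n ((j:ℕ):ℝ) * hb
    · -- interior row
      have hi1 : 1 ≤ (i : ℕ) := by omega
      have hi2 : (i : ℕ) + 1 < n := by omega
      have hrow : ∀ k : Fin n,
          (lap n + ((1:ℝ)/(n:ℝ)^2) • (1 : Matrix (Fin n) (Fin n) ℝ)) i k * TT n k j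
          = (if (k:ℕ) = (i:ℕ) then (2+(1:ℝ)/(n:ℝ)^2) * TT n k j else 0)
            + ((if (k:ℕ) = (i:ℕ)-1 then -TT n k j else 0)
            + (if (k:ℕ) = (i:ℕ)+1 then -TT n k j else 0)) := by
        intro k
        have hkv := k.isLt
        simp only [Matrix.add_apply, Matrix.smul_apply, Matrix.one_apply, lap,
          Matrix.of_apply, smul_eq_mul, Fin.ext_iff]
        split_ifs
        all_goals try ring
        all_goals exfalso
        all_goals omega
      rw [Finset.sum_congr rfl (fun k _ => hrow k), Finset.sum_add_distrib,
        Finset.sum_add_distrib,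
        sum_ite_val (fun k => (2+(1:ℝ)/(n:ℝ)^2) * TT n k j) (show (i:ℕ) < n by omega),
        sum_ite_val (fun k => -TT n k j) (show (i:ℕ)-1 < n by omega),
        sum_ite_val (fun k => -TT n k j) (show (i:ℕ)+1 < n by omega)]
      try simp only []
      have hcastm : (((i:ℕ) - 1 : ℕ) : ℝ) = ((i:ℕ) : ℝ) - 1 := by
        rw [Nat.cast_sub hi1]; norm_num
      have hcastp : (((i:ℕ) + 1 : ℕ) : ℝ) = ((i:ℕ) : ℝ) + 1 := by push_cast; ring
      rcases lt_trichotomy (j:ℕ) (i:ℕ) with hlt | heq | hgt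
      · rw [if_neg (fun h => by rw [Fin.ext_iff.mp h] at hlt; omega)]
        have e0 : TT n ⟨(i:ℕ), by omega⟩ j = fv n (j:ℕ) * gv n ((i:ℕ):ℝ) / Dv n := by
          rw [TT_apply_ge _ _ (by simp; omega)]
        have e1 : TT n ⟨(i:ℕ)-1, by omega⟩ j = fv n (j:ℕ) * gv n (((i:ℕ):ℝ)-1) / Dv n := by
          rw [TT_apply_ge _ _ (by simp; omega)]
          simp only [Fin.val_mk, hcastm]
        have e2 : TT n ⟨(i:ℕ)+1, by omega⟩ j = fv n (j:ℕ) * gv n (((i:ℕ):ℝ)+1) / Dv n := by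
          rw [TT_apply_ge _ _ (by simp; omega)]
          simp only [Fin.val_mk, hcastp]
        rw [e0, e1, e2, comb3, div_eq_iff hD]
        have hr := rec_gv hn1 ((i:ℕ):ℝ)
        linear_combination (-fv n ((j:ℕ):ℝ)) * hr
      · rw [if_pos (Fin.ext heq.symm)]
        have hjr : ((j:ℕ) : ℝ) = ((i:ℕ):ℝ) := by rw [heq]
        have e0 : TT n ⟨(i:ℕ), by omega⟩ j = fv n ((i:ℕ):ℝ) * gv n ((i:ℕ):ℝ) / Dv n := by
          rw [TT_apply_le _ _ (by simp; omega), hjr]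
        have e1 : TT n ⟨(i:ℕ)-1, by omega⟩ j
            = fv n (((i:ℕ):ℝ)-1) * gv n ((i:ℕ):ℝ) / Dv n := by
          rw [TT_apply_le _ _ (by simp; omega), hjr]
          simp only [Fin.val_mk, hcastm]
        have e2 : TT n ⟨(i:ℕ)+1, by omega⟩ j
            = fv n ((i:ℕ):ℝ) * gv n (((i:ℕ):ℝ)+1) / Dv n := by
          rw [TT_apply_ge _ _ (by simp; omega), hjr]
          simp only [Fin.val_mk, hcastp]
        rw [e0, e1, e2, comb3, div_eq_iff hD]
        have hrf := rec_fv hn1 ((i:ℕ):ℝ)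
        have hw := wron_fg hn1 ((i:ℕ):ℝ)
        linear_combination (-gv n ((i:ℕ):ℝ)) * hrf + hw
      · rw [if_neg (fun h => by rw [Fin.ext_iff.mp h] at hgt; omega)]
        have e0 : TT n ⟨(i:ℕ), by omega⟩ j = fv n ((i:ℕ):ℝ) * gv n (j:ℕ) / Dv n := by
          rw [TT_apply_le _ _ (by simp; omega)]
        have e1 : TT n ⟨(i:ℕ)-1, by omega⟩ j
            = fv n (((i:ℕ):ℝ)-1) * gv n (j:ℕ) / Dv n := by
          rw [TT_apply_le _ _ (by simp; omega)]
          simp only [Fin.val_mk, hcastm]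
        have e2 : TT n ⟨(i:ℕ)+1, by omega⟩ j
            = fv n (((i:ℕ):ℝ)+1) * gv n (j:ℕ) / Dv n := by
          rw [TT_apply_le _ _ (by simp; omega)]
          simp only [Fin.val_mk, hcastp]
        rw [e0, e1, e2, comb3, div_eq_iff hD]
        have hrf := rec_fv hn1 ((i:ℕ):ℝ)
        linear_combination (-gv n ((j:ℕ):ℝ)) * hrf
lemma sinh_superadd (x : ℝ) (hx : 0 ≤ x) (m : ℕ) :
    (m : ℝ) * Real.sinh x ≤ Real.sinh (m * x) := by
  induction m with
  | zero => simp
  | succ p ih =>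
    have h4 : 0 ≤ Real.sinh x := by simpa using Real.sinh_le_sinh.mpr hx
    have h1 : 0 ≤ Real.sinh ((p:ℝ) * x) := by
      simpa using Real.sinh_le_sinh.mpr (by positivity : (0:ℝ) ≤ (p:ℝ) * x)
    have h2 : 1 ≤ Real.cosh x := Real.one_le_cosh x
    have h3 : 1 ≤ Real.cosh ((p:ℝ) * x) := Real.one_le_cosh _
    have harg : ((p + 1 : ℕ) : ℝ) * x = (p:ℝ) * x + x := by push_cast; ring
    rw [harg, Real.sinh_add]
    push_cast
    nlinarith [ih, mul_nonneg h1 (by linarith : (0:ℝ) ≤ Real.cosh x - 1),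
      mul_nonneg (by linarith : (0:ℝ) ≤ Real.cosh ((p:ℝ)*x) - 1) h4]

section numeric
variable {n : ℕ} (hn : 1 ≤ n)
include hn

lemma nt_le_one : (n:ℝ) * tpar n ≤ 1 := by
  have hnp := npos hn
  have h0 : (0:ℝ) < 1 / (2*n) := by positivity
  have ha : Real.arsinh (1/(2*(n:ℝ))) ≤ 1/(2*n) := by
    have h1 : 0 ≤ Real.arsinh (1/(2*(n:ℝ))) := le_of_lt (Real.arsinh_pos_iff.mpr h0)
    calc Real.arsinh (1/(2*(n:ℝ))) ≤ Real.sinh (Real.arsinh (1/(2*(n:ℝ)))) :=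
          Real.self_le_sinh_iff.mpr h1
      _ = 1/(2*n) := Real.sinh_arsinh _
  have : (n:ℝ) * tpar n ≤ (n:ℝ) * (2 * (1/(2*n))) := by
    rw [tpar]
    have := mul_le_mul_of_nonneg_left ha (by norm_num : (0:ℝ) ≤ 2)
    nlinarith
  calc (n:ℝ) * tpar n ≤ (n:ℝ) * (2 * (1/(2*n))) := this
    _ = 1 := by field_simp

lemma cosh_le_S : Real.cosh (tpar n / 2) ≤ Real.sinh ((n:ℝ) * tpar n) := by
  have h := sinh_superadd (tpar n) (le_of_lt (tpar_pos hn)) n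
  rw [sinh_tpar hn] at h
  have hnp := npos hn
  calc Real.cosh (tpar n / 2) = (n:ℝ) * (Real.cosh (tpar n / 2) / n) := by field_simp
    _ ≤ Real.sinh ((n:ℝ) * tpar n) := h

lemma S_le : Real.sinh ((n:ℝ) * tpar n) ≤ Real.sinh 1 :=
  Real.sinh_le_sinh.mpr (nt_le_one hn)

end numeric

lemma sinh_one_lt : Real.sinh 1 < 3/2 := by
  rw [Real.sinh_eq]
  have h1 := Real.exp_one_lt_d9
  have h2 := Real.exp_pos (-1:ℝ)
  norm_num at h1 ⊢
  nlinarith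

lemma cosh_one_lt : Real.cosh 1 < 7/4 := by
  rw [Real.cosh_eq]
  have h1 := Real.exp_one_lt_d9
  have h2 := Real.exp_one_gt_d9
  have h3 : Real.exp (-1:ℝ) = (Real.exp 1)⁻¹ := by
    rw [← Real.exp_neg]
  rw [h3]
  have h4 : (Real.exp 1)⁻¹ < 1/2 := by
    rw [inv_lt_comm₀ (Real.exp_pos 1) (by norm_num)]
    nlinarith
  nlinarith

/-- The core numeric estimate. -/
lemma bounds_core {n : ℕ} (hn : 1 ≤ n) (cB : ℝ) (hB1 : 1 ≤ cB) (hB2 : cB ≤ Real.cosh 1) :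
    (1 - Real.pi^2/12) * n ≤ (n:ℝ) * cB / Real.sinh ((n:ℝ) * tpar n) ∧
      (n:ℝ) * cB / Real.sinh ((n:ℝ) * tpar n) ≤ (1 + Real.pi^2/12) * n := by
  have hnp := npos hn
  set S := Real.sinh ((n:ℝ) * tpar n) with hSdef
  have hS0 : 0 < S := Real.sinh_pos_iff.mpr (mul_pos hnp (tpar_pos hn))
  have hS1 : 1 ≤ S := le_trans (Real.one_le_cosh _) (cosh_le_S hn)
  have hS2 : S < 3/2 := lt_of_le_of_lt (S_le hn) sinh_one_lt
  have hc1 : cB < 7/4 := lt_of_le_of_lt hB2 cosh_one_lt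
  have hpi := Real.pi_gt_three
  have hpi2 : 9 ≤ Real.pi^2 := by nlinarith
  constructor
  · rw [le_div_iff₀ hS0]
    nlinarith [mul_nonneg (le_of_lt hnp) (by linarith : (0:ℝ) ≤ cB - 1),
      mul_nonneg (mul_nonneg (by linarith : (0:ℝ) ≤ Real.pi^2 - 9) (le_of_lt hnp)) (le_of_lt hS0),
      mul_nonneg (le_of_lt hnp) (by linarith : (0:ℝ) ≤ 3/2 - S)]
  · rw [div_le_iff₀ hS0]
    nlinarith [mul_nonneg (mul_nonneg (by linarith : (0:ℝ) ≤ Real.pi^2 - 9) (le_of_lt hnp)) (le_of_lt hS0),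
      mul_nonneg (le_of_lt hnp) (by linarith : (0:ℝ) ≤ cB - 1),
      mul_pos hnp hS0]

lemma Smat_eq_TT {n : ℕ} (hn : 2 ≤ n) : Smat n = TT n := by
  rw [Smat]
  exact Matrix.inv_eq_right_inv (mulTT hn)

lemma tpar_le_one {n : ℕ} (hn : 1 ≤ n) : tpar n ≤ 1 := by
  have hn1 : (1:ℝ) ≤ n := by exact_mod_cast hn
  have ht := tpar_pos hn
  have h1 := nt_le_one hn
  nlinarith

theorem Smat_corner_entries_bounds (n : ℕ) (hn : 1 ≤ n) :
    ((1 - Real.pi^2/12) * n ≤ Smat n ⟨0, by omega⟩ ⟨n - 1, by omega⟩ ∧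
      Smat n ⟨0, by omega⟩ ⟨n - 1, by omega⟩ ≤ (1 + Real.pi^2/12) * n) ∧
    ((1 - Real.pi^2/12) * n ≤ Smat n ⟨n - 1, by omega⟩ ⟨n - 1, by omega⟩ ∧
      Smat n ⟨n - 1, by omega⟩ ⟨n - 1, by omega⟩ ≤ (1 + Real.pi^2/12) * n) := by
  have hpi := Real.pi_gt_three
  have hpi2 : 9 ≤ Real.pi^2 := by nlinarith
  rcases eq_or_lt_of_le hn with h1 | h2
  · -- n = 1
    have hn1 : n = 1 := h1.symm
    subst hn1
    have hone : Smat 1 = Matrix.of (fun _ _ => (1/2 : ℝ)) := by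
      rw [Smat]
      apply Matrix.inv_eq_right_inv
      ext i j
      fin_cases i; fin_cases j
      simp [lap, Matrix.mul_apply, Matrix.one_apply, Fin.sum_univ_one]
      norm_num
    have he : ∀ (a b : Fin 1), Smat 1 a b = 1/2 := by
      intro a b; rw [hone]; rfl
    simp only [he]
    norm_num
    constructor <;> nlinarith
  · -- n ≥ 2
    have hn2 : 2 ≤ n := h2
    have hn1 : 1 ≤ n := hn
    have hnp := npos hn1
    have hc0pos : (0:ℝ) < Real.cosh (tpar n / 2) := Real.cosh_pos _
    have hSpos : (0:ℝ) < Real.sinh ((n:ℝ) * tpar n) :=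
      Real.sinh_pos_iff.mpr (mul_pos hnp (tpar_pos hn1))
    have hDval : Dv n = (Real.cosh (tpar n / 2) / n) * Real.sinh ((n:ℝ) * tpar n) := by
      rw [Dv, sinh_tpar hn1]
    have hfv0 : fv n 0 = Real.cosh (tpar n / 2) := by
      rw [fv, show ((0:ℝ)+1/2) * tpar n = tpar n/2 by ring]
    have hgvN : gv n ((n:ℝ)-1) = Real.cosh (tpar n / 2) := by
      rw [gv, show ((n:ℝ)-1/2-((n:ℝ)-1)) * tpar n = tpar n/2 by ring]
    have hfvN : fv n ((n:ℝ)-1) = Real.cosh (((n:ℝ)-1/2) * tpar n) := by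
      rw [fv, show ((n:ℝ)-1+1/2)*tpar n = ((n:ℝ)-1/2)*tpar n by ring]
    -- bounds for the cosh factors
    have hb0 : Real.cosh (tpar n / 2) ≤ Real.cosh 1 := by
      rw [Real.cosh_le_cosh]
      have ht := tpar_pos hn1
      have := tpar_le_one hn1
      rw [abs_of_nonneg (by linarith), abs_of_nonneg (by norm_num : (0:ℝ) ≤ 1)]
      linarith
    have hbN : Real.cosh (((n:ℝ)-1/2) * tpar n) ≤ Real.cosh 1 := by
      rw [Real.cosh_le_cosh]
      have ht := tpar_pos hn1
      have h1 := nt_le_one hn1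
      have hn1' : (1:ℝ) ≤ n := by exact_mod_cast hn1
      have harg : (0:ℝ) ≤ ((n:ℝ)-1/2) * tpar n := by nlinarith
      have harg2 : ((n:ℝ)-1/2) * tpar n ≤ (n:ℝ) * tpar n := by nlinarith
      rw [abs_of_nonneg harg, abs_of_nonneg (by norm_num : (0:ℝ) ≤ 1)]
      linarith
    -- the two entries
    have hS := Smat_eq_TT hn2
    have hcastN : ((n - 1 : ℕ) : ℝ) = (n : ℝ) - 1 := by
      rw [Nat.cast_sub hn1]; norm_num
    have hA : Smat n ⟨0, by omega⟩ ⟨n - 1, by omega⟩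
        = (n:ℝ) * Real.cosh (tpar n / 2) / Real.sinh ((n:ℝ) * tpar n) := by
      rw [hS, TT_apply_le _ _ (by simp)]
      simp only [Fin.val_mk, hcastN, Nat.cast_zero]
      rw [hfv0, hgvN, hDval]
      field_simp
    have hB : Smat n ⟨n - 1, by omega⟩ ⟨n - 1, by omega⟩
        = (n:ℝ) * Real.cosh (((n:ℝ)-1/2) * tpar n) / Real.sinh ((n:ℝ) * tpar n) := by
      rw [hS, TT_apply_le _ _ (le_refl _)]
      simp only [Fin.val_mk, hcastN]
      rw [hfvN, hgvN, hDval]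
      field_simp
    rw [hA, hB]
    exact ⟨bounds_core hn1 _ (Real.one_le_cosh _) hb0,
      bounds_core hn1 _ (Real.one_le_cosh _) hbN⟩
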